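/- Let G = S₃ and y₁, y₂, y₃ be the irreducible factors of the group determinant (y₃ of degree 2). Then the invariant ring {f ∈ ℂ[y₁,y₂,y₃] : D_{(123)} f = 0} equals ℂ[y₁y₃, y₂y₃], and {f ∈ ℂ[y₁,y₂,y₃] : D_{(12)} f = 0} equals ℂ[y₁y₂, y₃]. -/

import Mathlib

open MvPolynomial Equiv

/-- The Frobenius differential operator `D_g f = ∑_{h ∈ G} x_{g⁻¹ h} ∂f/∂x_h`. -/
noncomputable def Dop {G : Type*} [Group G] [Fintype G] [DecidableEq G] (g : G)
    (f : MvPolynomial G ℂ) : MvPolynomial G ℂ :=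
  ∑ h : G, X (g⁻¹ * h) * pderiv h f

/-- The matrix `X = ∑_{h ∈ G} φ(h) x_h` with entries in the polynomial ring. -/
noncomputable def repMatrix {G : Type*} [Group G] [Fintype G] [DecidableEq G] {d : ℕ}
    (φ : G →* Matrix (Fin d) (Fin d) ℂ) : Matrix (Fin d) (Fin d) (MvPolynomial G ℂ) :=
  ∑ h : G, (X h : MvPolynomial G ℂ) • (φ h).map C

section Aux

set_option linter.unusedSectionVars false

variable {G : Type*} [Group G] [Fintype G] [DecidableEq G]

local notation "R" => MvPolynomial G ℂ

/-- `Dop g` bundled as a derivation. -/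
noncomputable def DopD (g : G) : Derivation ℂ R R where
  toFun := Dop g
  map_add' f₁ f₂ := by simp [Dop, mul_add, Finset.sum_add_distrib]
  map_smul' c f := by simp [Dop, Finset.smul_sum, mul_smul_comm]
  map_one_eq_zero' := by
    show Dop g 1 = 0
    simp [Dop]
  leibniz' a b := by
    show Dop g (a * b) = a * Dop g b + b * Dop g a
    simp only [LinearMap.coe_mk, AddHom.coe_mk, Dop, pderiv_mul, smul_eq_mul, Finset.mul_sum,
      ← Finset.sum_add_distrib]
    exact Finset.sum_congr rfl fun h _ => by ring

lemma Dop_eq (g : G) (f : R) : Dop g f = DopD g f := rfl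

lemma Dop_mul (g : G) (a b : R) : Dop g (a * b) = a * Dop g b + b * Dop g a := by
  rw [Dop_eq, Derivation.leibniz]; simp only [smul_eq_mul]; rfl

lemma Dop_X (g k : G) : Dop g (X k : R) = X (g⁻¹ * k) := by
  rw [Dop, Finset.sum_eq_single k]
  · simp
  · intro h _ hh
    rw [pderiv_X_of_ne (Ne.symm hh), mul_zero]
  · simp

lemma Dop_C_mul_X (g k : G) (a : ℂ) :
    Dop g (C a * X k : R) = C a * X (g⁻¹ * k) := by
  rw [C_mul', C_mul', Dop_eq, Derivation.map_smul, ← Dop_eq, Dop_X]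

lemma Dop_sum_C_mul_X (g : G) (c : G → ℂ) :
    Dop g (∑ h : G, C (c h) * X h : R) = ∑ h : G, C (c (g * h)) * X h := by
  rw [Dop_eq, map_sum]
  rw [Finset.sum_congr rfl fun h _ => show (DopD g) (C (c h) * X h) = C (c h) * X (g⁻¹ * h)
    from by rw [← Dop_eq, Dop_C_mul_X]]
  exact Fintype.sum_equiv (Equiv.mulLeft g⁻¹) _ _ fun h => by
    simp [Equiv.coe_mulLeft, mul_inv_cancel_left]

lemma Dop_y1 (g : G) : Dop g (∑ h : G, X h : R) = ∑ h : G, X h := by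
  rw [Dop_eq, map_sum]
  simp only [← Dop_eq, Dop_X]
  exact Fintype.sum_equiv (Equiv.mulLeft g⁻¹) _ _ fun h => rfl

lemma repMatrix_apply {d : ℕ} (φ : G →* Matrix (Fin d) (Fin d) ℂ) (i j : Fin d) :
    repMatrix φ i j = ∑ h : G, C (φ h i j) * X h := by
  rw [repMatrix, Matrix.sum_apply]
  exact Finset.sum_congr rfl fun h _ => by
    simp [Matrix.smul_apply, Matrix.map_apply, smul_eq_mul, mul_comm]

lemma Dop_repMatrix {d : ℕ} (φ : G →* Matrix (Fin d) (Fin d) ℂ) (g : G) (i j : Fin d) :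
    Dop g (repMatrix φ i j) = ∑ l, C ((φ g) i l) * repMatrix φ l j := by
  rw [repMatrix_apply, Dop_sum_C_mul_X]
  have : ∀ h : G, C (φ (g * h) i j) * (X h : R)
      = ∑ l, C ((φ g) i l) * (C (φ h l j) * X h) := by
    intro h
    rw [map_mul φ, Matrix.mul_apply, map_sum C, Finset.sum_mul]
    exact Finset.sum_congr rfl fun l _ => by rw [map_mul C]; ring
  rw [Finset.sum_congr rfl fun h _ => this h, Finset.sum_comm]
  exact Finset.sum_congr rfl fun l _ => by rw [repMatrix_apply, Finset.mul_sum]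

lemma Dop_det2 (φ : G →* Matrix (Fin 2) (Fin 2) ℂ) (g : G) :
    Dop g (repMatrix φ).det = C ((φ g).trace) * (repMatrix φ).det := by
  have hent : ∀ i j, Dop g (repMatrix φ i j) =
      C (φ g i 0) * repMatrix φ 0 j + C (φ g i 1) * repMatrix φ 1 j := fun i j => by
    rw [Dop_repMatrix, Fin.sum_univ_two]
  rw [Matrix.det_fin_two, Matrix.trace_fin_two]
  rw [show Dop g (repMatrix φ 0 0 * repMatrix φ 1 1 - repMatrix φ 0 1 * repMatrix φ 1 0)
      = Dop g (repMatrix φ 0 0 * repMatrix φ 1 1) - Dop g (repMatrix φ 0 1 * repMatrix φ 1 0)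
    from by rw [Dop_eq, Dop_eq, Dop_eq, map_sub]]
  rw [Dop_mul, Dop_mul, hent 0 0, hent 1 1, hent 0 1, hent 1 0, map_add C]
  ring

lemma eig_pow (D : Derivation ℂ R R) {y : R} {e : ℂ} (h : D y = e • y) (n : ℕ) :
    D (y ^ n) = ((n : ℂ) * e) • y ^ n := by
  induction n with
  | zero => simp
  | succ n ih =>
    rw [pow_succ, Derivation.leibniz, ih, h, smul_eq_C_mul, smul_eq_C_mul, smul_eq_C_mul,
      smul_eq_mul, smul_eq_mul]
    push_cast
    simp only [map_add, map_mul, map_one]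
    ring

lemma aeval_monomial_three (Y : Fin 3 → R) (α : Fin 3 →₀ ℕ) (a : ℂ) :
    aeval Y (monomial α a) = C a * (Y 0 ^ α 0 * (Y 1 ^ α 1 * Y 2 ^ α 2)) := by
  rw [aeval_monomial, Finsupp.prod_fintype _ _ (fun i => pow_zero (Y i)), Fin.prod_univ_three]
  rw [show (algebraMap ℂ R) a = C a from rfl]
  ring

lemma eig_monomial (D : Derivation ℂ R R) (Y : Fin 3 → R) (e : Fin 3 → ℤ)
    (h : ∀ i, D (Y i) = ((e i : ℂ)) • Y i) (α : Fin 3 →₀ ℕ) (a : ℂ) :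
    D (aeval Y (monomial α a)) =
      ((((α 0 : ℤ) * e 0 + (α 1 : ℤ) * e 1 + (α 2 : ℤ) * e 2 : ℤ) : ℂ))
        • aeval Y (monomial α a) := by
  rw [aeval_monomial_three, C_mul', Derivation.map_smul, Derivation.leibniz,
    Derivation.leibniz, eig_pow D (h 0), eig_pow D (h 1), eig_pow D (h 2)]
  push_cast
  simp only [smul_eq_C_mul, smul_eq_mul, map_add, map_mul]
  ring

lemma eig_indep (D : Derivation ℂ R R) :
    ∀ (S : Finset ℤ) (v : ℤ → R), (∀ lam ∈ S, D (v lam) = ((lam : ℂ)) • v lam) →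
      (∑ lam ∈ S, v lam) = 0 → ∀ lam ∈ S, v lam = 0 := by
  intro S
  induction S using Finset.induction_on with
  | empty => intro v _ _ lam h; exact absurd h (Finset.notMem_empty lam)
  | @insert a s hx ih =>
    intro v hv hsum
    have hsum' : v a = -∑ lam ∈ s, v lam := by
      rw [Finset.sum_insert hx] at hsum
      linear_combination (norm := module) hsum
    have hDsum : ((a : ℂ)) • v a + ∑ lam ∈ s, ((lam : ℂ)) • v lam = 0 := by
      have := congrArg D hsum
      rw [Finset.sum_insert hx, map_add, map_sum, map_zero,
        hv a (Finset.mem_insert_self a s)] at this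
      rw [← this]
      congr 1
      exact Finset.sum_congr rfl fun lam hlam => (hv lam (Finset.mem_insert_of_mem hlam)).symm
    have key : (∑ lam ∈ s, (((lam : ℂ)) - a) • v lam) = 0 := by
      rw [hsum'] at hDsum
      have : ∑ lam ∈ s, ((((lam : ℂ)) - a) • v lam)
          = ∑ lam ∈ s, ((lam : ℂ)) • v lam - ((a : ℂ)) • (∑ lam ∈ s, v lam) := by
        rw [Finset.smul_sum, ← Finset.sum_sub_distrib]
        exact Finset.sum_congr rfl fun lam _ => by rw [sub_smul]
      rw [this]
      linear_combination (norm := module) hDsum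
    have hzero : ∀ lam ∈ s, (((lam : ℂ)) - a) • v lam = 0 := by
      apply ih (fun lam => (((lam : ℂ)) - a) • v lam) _ key
      intro lam hlam
      rw [Derivation.map_smul, hv lam (Finset.mem_insert_of_mem hlam), smul_smul, smul_smul,
        mul_comm]
    have hvs : ∀ lam ∈ s, v lam = 0 := by
      intro lam hlam
      have hne : (((lam : ℂ)) - a) ≠ 0 := by
        rw [sub_ne_zero]
        have : lam ≠ a := fun hh => hx (hh ▸ hlam)
        exact_mod_cast this
      exact (smul_eq_zero.mp (hzero lam hlam)).resolve_left hne
    intro lam hlam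
    rcases Finset.mem_insert.mp hlam with h | h
    · subst h
      rw [hsum', Finset.sum_congr rfl hvs, Finset.sum_const_zero, neg_zero]
    · exact hvs lam h

lemma mem_of_ker (D : Derivation ℂ R R) (Y : Fin 3 → R) (e : Fin 3 → ℤ)
    (hYe : ∀ i, D (Y i) = ((e i : ℂ)) • Y i) (A' : Subalgebra ℂ R)
    (hmono : ∀ (α : Fin 3 →₀ ℕ) (a : ℂ),
      (α 0 : ℤ) * e 0 + (α 1 : ℤ) * e 1 + (α 2 : ℤ) * e 2 = 0 →
      aeval Y (monomial α a) ∈ A')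
    {f : R} (hf : f ∈ Algebra.adjoin ℂ (Set.range Y)) (hDf : D f = 0) : f ∈ A' := by
  rw [Algebra.adjoin_range_eq_range_aeval] at hf
  obtain ⟨p, hp⟩ := hf
  have hp2 : (aeval Y) p = f := hp
  rw [← hp2] at hDf ⊢
  clear hp hp2
  set w : (Fin 3 →₀ ℕ) → ℤ :=
    fun α => (α 0 : ℤ) * e 0 + (α 1 : ℤ) * e 1 + (α 2 : ℤ) * e 2 with hw
  set S : Finset ℤ := p.support.image w with hS
  set v : ℤ → R := fun lam =>
    ∑ α ∈ p.support.filter (fun α => w α = lam), aeval Y (monomial α (p.coeff α)) with hv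
  have hfv : (aeval Y) p = ∑ lam ∈ S, v lam := by
    conv_lhs => rw [p.as_sum]
    rw [map_sum]
    exact (Finset.sum_fiberwise_of_maps_to
      (fun α hα => Finset.mem_image_of_mem w hα) _).symm
  have hDv : ∀ lam, D (v lam) = ((lam : ℂ)) • v lam := by
    intro lam
    rw [hv]
    rw [map_sum, Finset.smul_sum]
    refine Finset.sum_congr rfl fun α hα => ?_
    have h2 : w α = lam := (Finset.mem_filter.mp hα).2
    calc D (aeval Y (monomial α (p.coeff α)))
        = ((w α : ℂ)) • aeval Y (monomial α (p.coeff α)) := eig_monomial D Y e hYe α _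
      _ = ((lam : ℂ)) • aeval Y (monomial α (p.coeff α)) := by rw [h2]
  have hvzero : ∀ lam ∈ S, lam ≠ 0 → v lam = 0 := by
    have hu : ∀ lam ∈ S, D (((lam : ℂ)) • v lam) = ((lam : ℂ)) • (((lam : ℂ)) • v lam) := by
      intro lam _
      rw [Derivation.map_smul, hDv]
    have husum : (∑ lam ∈ S, ((lam : ℂ)) • v lam) = 0 := by
      have := congrArg D hfv
      rw [hDf, map_sum] at this
      rw [← Finset.sum_congr rfl fun lam (_ : lam ∈ S) => hDv lam]
      exact this.symm
    have := eig_indep D S (fun lam => ((lam : ℂ)) • v lam) hu husum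
    intro lam hlam hne
    have hne' : ((lam : ℂ)) ≠ 0 := by exact_mod_cast hne
    exact (smul_eq_zero.mp (this lam hlam)).resolve_left hne'
  rw [hfv]
  apply Subalgebra.sum_mem
  intro lam hlam
  by_cases h0 : lam = 0
  · subst h0
    apply Subalgebra.sum_mem
    intro α hα
    exact hmono α _ ((Finset.mem_filter.mp hα).2)
  · rw [hvzero lam hlam h0]; exact zero_mem _

lemma ker_of_mem (D : Derivation ℂ R R) (s : Set R)
    (hs : ∀ z ∈ s, D z = 0) {f : R} (hf : f ∈ Algebra.adjoin ℂ s) : D f = 0 := by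
  induction hf using Algebra.adjoin_induction with
  | mem z hz => exact hs z hz
  | algebraMap r => exact D.map_algebraMap r
  | add x y _ _ hx hy => rw [map_add, hx, hy, add_zero]
  | mul x y _ _ hx hy => rw [D.leibniz, hx, hy, smul_zero, smul_zero, add_zero]

end Aux

/-- First fundamental theorems for `S₃`:
`ℂ[y]^{D_{(123)}} = ℂ[y₁y₃, y₂y₃]` and `ℂ[y]^{D_{(12)}} = ℂ[y₁y₂, y₃]`. -/
theorem invariant_rings_S3
    (φ₃ : Perm (Fin 3) →* Matrix (Fin 2) (Fin 2) ℂ)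
    (hc : (φ₃ (swap 0 2 * swap 0 1)).trace = -1)
    (ht : (φ₃ (swap 0 1)).trace = 0)
    (y₁ y₂ y₃ : MvPolynomial (Perm (Fin 3)) ℂ)
    (hy₁ : y₁ = ∑ h : Perm (Fin 3), X h)
    (hy₂ : y₂ = ∑ h : Perm (Fin 3), C (((Perm.sign h : ℤ) : ℂ)) * X h)
    (hy₃ : y₃ = (repMatrix φ₃).det) :
    ∀ f ∈ Algebra.adjoin ℂ {y₁, y₂, y₃},
      (Dop (swap 0 2 * swap 0 1) f = 0 ↔ f ∈ Algebra.adjoin ℂ {y₁ * y₃, y₂ * y₃}) ∧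
        (Dop (swap 0 1) f = 0 ↔ f ∈ Algebra.adjoin ℂ {y₁ * y₂, y₃}) := by
  intro f hf
  -- eigenvalue computations
  have hD1 : ∀ g : Perm (Fin 3), Dop g y₁ = ((1 : ℤ) : ℂ) • y₁ := by
    intro g
    rw [hy₁, Dop_y1]
    simp
  have hD2 : ∀ g : Perm (Fin 3),
      Dop g y₂ = ((Perm.sign g : ℤ) : ℂ) • y₂ := by
    intro g
    rw [hy₂, Dop_sum_C_mul_X, smul_eq_C_mul, Finset.mul_sum]
    refine Finset.sum_congr rfl fun h _ => ?_
    rw [show ((Perm.sign (g * h) : ℤ) : ℂ)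
        = ((Perm.sign g : ℤ) : ℂ) * ((Perm.sign h : ℤ) : ℂ) from by
      rw [map_mul]; push_cast; ring]
    rw [map_mul C]
    ring
  have hsc : Perm.sign (swap 0 2 * swap 0 1 : Perm (Fin 3)) = 1 := by decide
  have hst : Perm.sign (swap 0 1 : Perm (Fin 3)) = -1 := by decide
  have hD2c : Dop (swap 0 2 * swap 0 1) y₂ = ((1 : ℤ) : ℂ) • y₂ := by
    rw [hD2, hsc]; norm_num
  have hD2t : Dop (swap 0 1) y₂ = ((-1 : ℤ) : ℂ) • y₂ := by
    rw [hD2, hst]; norm_num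
  have hD3c : Dop (swap 0 2 * swap 0 1) y₃ = ((-1 : ℤ) : ℂ) • y₃ := by
    rw [hy₃, Dop_det2, hc, smul_eq_C_mul]
    norm_num
  have hD3t : Dop (swap 0 1) y₃ = ((0 : ℤ) : ℂ) • y₃ := by
    rw [hy₃, Dop_det2, ht, smul_eq_C_mul]
    norm_num
  set Y : Fin 3 → MvPolynomial (Perm (Fin 3)) ℂ := ![y₁, y₂, y₃] with hY
  have hset : ({y₁, y₂, y₃} : Set (MvPolynomial (Perm (Fin 3)) ℂ)) = Set.range Y := by
    rw [hY, Matrix.range_cons, Matrix.range_cons, Matrix.range_cons_empty, ← Set.insert_eq,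
      ← Set.insert_eq]
  rw [hset] at hf
  have hCmem : ∀ (A' : Subalgebra ℂ (MvPolynomial (Perm (Fin 3)) ℂ)) (a : ℂ), C a ∈ A' :=
    fun A' a => A'.algebraMap_mem a
  constructor
  · -- D_{(123)}
    constructor
    · intro hker
      refine mem_of_ker (DopD _) Y ![1, 1, -1] ?_ _ ?_ hf hker
      · intro i
        fin_cases i
        · exact hD1 _
        · exact hD2c
        · exact hD3c
      · intro α a hcond
        simp only [Matrix.cons_val_zero, Matrix.cons_val_one, Matrix.head_cons,
          Matrix.cons_val_two, Matrix.tail_cons] at hcond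
        have h2 : α 2 = α 0 + α 1 := by omega
        rw [aeval_monomial_three]
        rw [show (Y 0 : MvPolynomial (Perm (Fin 3)) ℂ) = y₁ from rfl,
          show (Y 1 : MvPolynomial (Perm (Fin 3)) ℂ) = y₂ from rfl,
          show (Y 2 : MvPolynomial (Perm (Fin 3)) ℂ) = y₃ from rfl]
        rw [show C a * (y₁ ^ α 0 * (y₂ ^ α 1 * y₃ ^ α 2))
            = C a * ((y₁ * y₃) ^ α 0 * ((y₂ * y₃) ^ α 1)) from by
          rw [h2, pow_add, mul_pow, mul_pow]; ring]
        exact Subalgebra.mul_mem _ (hCmem _ a)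
          (Subalgebra.mul_mem _
            (Subalgebra.pow_mem _ (Algebra.subset_adjoin (by simp)) _)
            (Subalgebra.pow_mem _ (Algebra.subset_adjoin (by simp)) _))
    · intro hmem
      rw [Dop_eq]
      refine ker_of_mem _ _ ?_ hmem
      intro z hz
      rcases hz with h | h
      · subst h
        rw [← Dop_eq, Dop_mul, hD1, hD3c, smul_eq_C_mul, smul_eq_C_mul]
        push_cast
        simp only [map_neg, map_one]
        ring
      · rw [Set.mem_singleton_iff] at h
        subst h
        rw [← Dop_eq, Dop_mul, hD2c, hD3c, smul_eq_C_mul, smul_eq_C_mul]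
        push_cast
        simp only [map_neg, map_one]
        ring
  · -- D_{(12)}
    constructor
    · intro hker
      refine mem_of_ker (DopD _) Y ![1, -1, 0] ?_ _ ?_ hf hker
      · intro i
        fin_cases i
        · exact hD1 _
        · exact hD2t
        · exact hD3t
      · intro α a hcond
        simp only [Matrix.cons_val_zero, Matrix.cons_val_one, Matrix.head_cons,
          Matrix.cons_val_two, Matrix.tail_cons] at hcond
        have h2 : α 1 = α 0 := by omega
        rw [aeval_monomial_three]
        rw [show (Y 0 : MvPolynomial (Perm (Fin 3)) ℂ) = y₁ from rfl,
          show (Y 1 : MvPolynomial (Perm (Fin 3)) ℂ) = y₂ from rfl,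
          show (Y 2 : MvPolynomial (Perm (Fin 3)) ℂ) = y₃ from rfl]
        rw [show C a * (y₁ ^ α 0 * (y₂ ^ α 1 * y₃ ^ α 2))
            = C a * ((y₁ * y₂) ^ α 0 * (y₃ ^ α 2)) from by
          rw [h2, mul_pow]; ring]
        exact Subalgebra.mul_mem _ (hCmem _ a)
          (Subalgebra.mul_mem _
            (Subalgebra.pow_mem _ (Algebra.subset_adjoin (by simp)) _)
            (Subalgebra.pow_mem _ (Algebra.subset_adjoin (by simp)) _))
    · intro hmem
      rw [Dop_eq]
      refine ker_of_mem _ _ ?_ hmem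
      intro z hz
      rcases hz with h | h
      · subst h
        rw [← Dop_eq, Dop_mul, hD1, hD2t, smul_eq_C_mul, smul_eq_C_mul]
        push_cast
        simp only [map_neg, map_one]
        ring
      · rw [Set.mem_singleton_iff] at h
        subst h
        rw [← Dop_eq, hD3t]
        simp
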